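/- arXiv:2307.09473 — 3 statements merged into one kernel-verified Lean document; each statement's English description precedes it below -/
import Mathlib

section
/- Let G be a graph and let a, b be vertices lying in a common connected component of G but in no common biconnected component, with BC-tree path B_a, c_1, B_1, c_2, ..., c_k, B_k, c_{k+1}, B_b between the blocks B_a ∋ a and B_b ∋ b. Then for each i ∈ [k], the graph G + {a,b} contains a path Q from c_i to c_{i+1} such that V(Q) ∩ V(B_i) = {c_i, c_{i+1}}; moreover, if G + {a,b} is planar, then G[V(B_i)] + {c_i, c_{i+1}} is planar. -/
open SimpleGraph

/-- The graph `G` with the edge `{a,b}` inserted. -/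
def addEdge {W : Type*} (G : SimpleGraph W) (a b : W) : SimpleGraph W :=
  G ⊔ SimpleGraph.fromEdgeSet {s(a, b)}

/-- `u` and `v` are joined by a walk all of whose vertices lie in `A`,
i.e. they are connected in the subgraph induced on `A`. -/
def ReachableWithin {W : Type*} (G : SimpleGraph W) (A : Set W) (u v : W) : Prop :=
  ∃ p : G.Walk u v, ∀ x ∈ p.support, x ∈ A

/-- The subgraph of `G` induced on the vertex set `A` is connected. -/
def ConnectedOn {W : Type*} (G : SimpleGraph W) (A : Set W) : Prop :=
  A.Nonempty ∧ ∀ ⦃u⦄, u ∈ A → ∀ ⦃v⦄, v ∈ A → ReachableWithin G A u v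

/-- The subgraph of `G` induced on `A` is biconnected: connected and without cut vertices. -/
def BiconnectedOn {W : Type*} (G : SimpleGraph W) (A : Set W) : Prop :=
  ConnectedOn G A ∧ ∀ w ∈ A, (A \ {w}).Nonempty → ConnectedOn G (A \ {w})

/-- `B` is (the vertex set of) a block of `G`: a maximal biconnected subgraph. -/
def IsBlock {W : Type*} (G : SimpleGraph W) (B : Set W) : Prop :=
  BiconnectedOn G B ∧ ∀ B' : Set W, B ⊆ B' → BiconnectedOn G B' → B' = B

/-- The subgraph of `G` induced on `A` is `k`-connected: it has more than `k` vertices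
and remains connected after deleting any fewer than `k` vertices. -/
def KConnectedOn {W : Type*} (k : ℕ) (G : SimpleGraph W) (A : Set W) : Prop :=
  (∃ f : Fin (k + 1) → W, Function.Injective f ∧ ∀ i, f i ∈ A) ∧
  ∀ S : Set W, S.Finite → S.ncard < k → ConnectedOn G (A \ S)

/-- `G` is `k`-connected. -/
def KConnected {W : Type*} (k : ℕ) (G : SimpleGraph W) : Prop :=
  KConnectedOn k G Set.univ

/-- Two walks with common endpoints are internally vertex-disjoint: they share no
vertices other than the endpoints. -/
def IntDisjoint {W : Type*} (G : SimpleGraph W) {s t : W} (p q : G.Walk s t) : Prop :=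
  ∀ x, x ∈ p.support → x ∈ q.support → x = s ∨ x = t

/-- The subgraph of `G` induced on the vertex set `A` (with edges only inside `A`),
as a graph on the ambient vertex type. -/
def inducedOn {W : Type*} (G : SimpleGraph W) (A : Set W) : SimpleGraph W :=
  SimpleGraph.fromRel (fun u v => u ∈ A ∧ v ∈ A ∧ G.Adj u v)

/-- A planar drawing of the part of the graph `G` induced on the vertex set `A`:
vertices are distinct points of the plane and edges are arcs that meet
only at shared endpoints. -/
structure PlanarDrawingOn {W : Type*} (G : SimpleGraph W) (A : Set W) where
  pos : W → ℝ × ℝ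
  pos_inj : Set.InjOn pos A
  arc : Sym2 W → Set (ℝ × ℝ)
  arc_spec : ∀ ⦃u v : W⦄, u ∈ A → v ∈ A → G.Adj u v →
    ∃ f : ℝ → ℝ × ℝ, ContinuousOn f (Set.Icc 0 1) ∧ Set.InjOn f (Set.Icc 0 1) ∧
      f 0 = pos u ∧ f 1 = pos v ∧ f '' Set.Icc 0 1 = arc s(u, v)
  arc_inter : ∀ ⦃e₁ e₂ : Sym2 W⦄, e₁ ∈ G.edgeSet → e₂ ∈ G.edgeSet →
    (∀ x ∈ e₁, x ∈ A) → (∀ x ∈ e₂, x ∈ A) → e₁ ≠ e₂ →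
    arc e₁ ∩ arc e₂ ⊆ {p : ℝ × ℝ | ∃ v ∈ A, v ∈ e₁ ∧ v ∈ e₂ ∧ p = pos v}
  pos_arc : ∀ ⦃e : Sym2 W⦄, e ∈ G.edgeSet → (∀ x ∈ e, x ∈ A) →
    ∀ v ∈ A, pos v ∈ arc e → v ∈ e

namespace PlanarDrawingOn

variable {W : Type*} {G : SimpleGraph W} {A : Set W}

/-- The set of points of the plane used by the drawing. -/
def image (D : PlanarDrawingOn G A) : Set (ℝ × ℝ) :=
  D.pos '' A ∪ ⋃ e ∈ {e : Sym2 W | e ∈ G.edgeSet ∧ ∀ x ∈ e, x ∈ A}, D.arc e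

/-- A face of a drawing: a connected component of the complement of the drawing. -/
def IsFace (D : PlanarDrawingOn G A) (F : Set (ℝ × ℝ)) : Prop :=
  ∃ x ∈ D.imageᶜ, F = connectedComponentIn D.imageᶜ x

/-- The outer face of a drawing is its unbounded face. -/
def IsOuterFace (D : PlanarDrawingOn G A) (F : Set (ℝ × ℝ)) : Prop :=
  D.IsFace F ∧ ¬ Bornology.IsBounded F

end PlanarDrawingOn

/-- A graph is planar if it admits a planar drawing. -/
def SimpleGraph.IsPlanar {W : Type*} (G : SimpleGraph W) : Prop :=
  Nonempty (PlanarDrawingOn G Set.univ)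

/-- All vertices of `S` lie on the boundary of a common face in a planar embedding of
the part of `G` induced on `A`. -/
def OnCommonFace {W : Type*} (G : SimpleGraph W) (A : Set W) (S : Set W) : Prop :=
  ∃ (D : PlanarDrawingOn G A) (F : Set (ℝ × ℝ)),
    D.IsFace F ∧ ∀ v ∈ S, D.pos v ∈ frontier F

/-- `w` is a cut vertex of `G`: its deletion disconnects two vertices that were connected. -/
def IsCutVertex {W : Type*} (G : SimpleGraph W) (w : W) : Prop :=
  ∃ u v : W, u ≠ w ∧ v ≠ w ∧ G.Reachable u v ∧ ¬ ReachableWithin G {w}ᶜ u v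

/-- The path `B_a, c_1, B_1, …, B_k, c_(k+1), B_b` in the BC-tree of the connected
component containing `a` and `b`, between the blocks `Bl 0 ∋ a` and `Bl (k+1) ∋ b`;
`c i` is the `i`-th cut vertex on the path, belonging to the blocks `Bl i` and `Bl (i+1)`. -/
structure BCPath {W : Type*} (G : SimpleGraph W) (a b : W) (k : ℕ) where
  Bl : Fin (k + 2) → Set W
  c : Fin (k + 1) → W
  isBlock : ∀ i, IsBlock G (Bl i)
  isCut : ∀ i, IsCutVertex G (c i)
  ha : a ∈ Bl 0
  hb : b ∈ Bl (Fin.last (k + 1))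
  linkL : ∀ i : Fin (k + 1), c i ∈ Bl i.castSucc
  linkR : ∀ i : Fin (k + 1), c i ∈ Bl i.succ
  Bl_inj : Function.Injective Bl
  c_inj : Function.Injective c

namespace Stmt8Aux
variable {V : Type*} {G : SimpleGraph V} {A A' : Set V} {u v w : V}

theorem RW.mono (h : A ⊆ A') (hr : ReachableWithin G A u v) : ReachableWithin G A' u v := by
  obtain ⟨p, hp⟩ := hr; exact ⟨p, fun x hx => h (hp x hx)⟩
theorem RW.symm (hr : ReachableWithin G A u v) : ReachableWithin G A v u := by
  obtain ⟨p, hp⟩ := hr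
  exact ⟨p.reverse, fun x hx => hp x (by simpa using hx)⟩
theorem RW.trans (h1 : ReachableWithin G A u v) (h2 : ReachableWithin G A v w) :
    ReachableWithin G A u w := by
  obtain ⟨p, hp⟩ := h1; obtain ⟨q, hq⟩ := h2
  refine ⟨p.append q, fun x hx => ?_⟩
  rw [SimpleGraph.Walk.mem_support_append_iff] at hx
  exact hx.elim (hp x) (hq x)

theorem chain_rw (G : SimpleGraph V) (D : ℕ → Set V) (U : Set V) (p : ℕ) :
    ∀ q, p ≤ q → (∀ t, p ≤ t → t ≤ q → ConnectedOn G (D t)) →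
    (∀ t, p ≤ t → t ≤ q → D t ⊆ U) →
    (∀ t, p ≤ t → t < q → (D t ∩ D (t+1)).Nonempty) →
    ∀ u ∈ D p, ∀ v ∈ D q, ReachableWithin G U u v := by
  intro q hq
  induction q, hq using Nat.le_induction with
  | base =>
    intro hconn hsub _ u hu v hv
    exact RW.mono (hsub p le_rfl le_rfl) ((hconn p le_rfl le_rfl).2 hu hv)
  | succ q hpq ih =>
    intro hconn hsub hlink u hu v hv
    obtain ⟨y, hy1, hy2⟩ := hlink q hpq (Nat.lt_succ_self q)
    have h1 : ReachableWithin G U u y :=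
      ih (fun t ht ht' => hconn t ht (ht'.trans (Nat.le_succ q)))
        (fun t ht ht' => hsub t ht (ht'.trans (Nat.le_succ q)))
        (fun t ht ht' => hlink t ht (ht'.trans_le (Nat.le_succ q))) u hu y hy1
    have h2 : ReachableWithin G U y v :=
      RW.mono (hsub (q+1) (hpq.trans (Nat.le_succ q)) le_rfl)
        ((hconn (q+1) (hpq.trans (Nat.le_succ q)) le_rfl).2 hy2 hv)
    exact RW.trans h1 h2

theorem cycle_bic (G : SimpleGraph V) (m : ℕ) (hm : 1 ≤ m)
    (C : ℕ → Set V) (hC : ∀ t ≤ m, BiconnectedOn G (C t))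
    (g : ℕ → V) (hgl : ∀ t < m, g t ∈ C t) (hgr : ∀ t < m, g t ∈ C (t+1))
    (x : V) (hx0 : x ∈ C 0) (hxm : x ∈ C m)
    (hxg : ∀ t < m, x ≠ g t)
    (hginj : ∀ s < m, ∀ t, t < m → g s = g t → s = t) :
    BiconnectedOn G (⋃ t ∈ Set.Iic m, C t) := by
  set U : Set V := ⋃ t ∈ Set.Iic m, C t with hU
  have hsubU : ∀ t, t ≤ m → C t ⊆ U := fun t ht =>
    Set.subset_biUnion_of_mem (u := fun t => C t) (Set.mem_Iic.mpr ht)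
  have hmemU : ∀ x' ∈ U, ∃ t ≤ m, x' ∈ C t := by
    intro x' hx'
    simp only [hU, Set.mem_iUnion, Set.mem_Iic] at hx'
    obtain ⟨t, ht, hx'⟩ := hx'; exact ⟨t, ht, hx'⟩
  constructor
  · -- connected
    refine ⟨⟨x, hsubU 0 (Nat.zero_le m) hx0⟩, ?_⟩
    have key : ∀ s ≤ m, ∀ u ∈ C s, ReachableWithin G U x u := by
      intro s hs u hu
      exact chain_rw G C U 0 s (Nat.zero_le s)
        (fun t _ ht' => (hC t (ht'.trans hs)).1)
        (fun t _ ht' => hsubU t (ht'.trans hs))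
        (fun t _ ht' => ⟨g t, hgl t (ht'.trans_le hs), hgr t (ht'.trans_le hs)⟩)
        x hx0 u hu
    intro u hu v hv
    obtain ⟨s, hs, hu'⟩ := hmemU u hu
    obtain ⟨t, ht, hv'⟩ := hmemU v hv
    exact RW.trans (RW.symm (key s hs u hu')) (key t ht v hv')
  · -- deletion
    intro w _ hne
    set D : ℕ → Set V := fun t => C t \ {w} with hD
    have hDsub : ∀ t, t ≤ m → D t ⊆ U \ {w} := fun t ht =>
      Set.diff_subset_diff_left (hsubU t ht)
    have hDconn : ∀ t ≤ m, (D t).Nonempty → ConnectedOn G (D t) := by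
      intro t ht hDne
      by_cases hw : w ∈ C t
      · exact (hC t ht).2 w hw hDne
      · have : D t = C t := Set.diff_singleton_eq_self hw
        rw [this]; exact (hC t ht).1
    -- two distinct marked vertices in each C t
    have htwo : ∀ t ≤ m, ∃ y z : V, y ∈ C t ∧ z ∈ C t ∧ y ≠ z := by
      intro t ht
      by_cases h0 : t = 0
      · exact ⟨x, g 0, h0 ▸ hx0, h0 ▸ hgl 0 hm, hxg 0 hm⟩
      by_cases hem : t = m
      · have h1 : g (m-1) ∈ C m := by
          have := hgr (m-1) (by omega)
          have e : m - 1 + 1 = m := by omega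
          rwa [e] at this
        exact ⟨x, g (m-1), hem ▸ hxm, hem ▸ h1, hxg (m-1) (by omega)⟩
      · have hlt : t < m := by omega
        have h1 : g (t-1) ∈ C t := by
          have := hgr (t-1) (by omega)
          have e : t - 1 + 1 = t := by omega
          rwa [e] at this
        refine ⟨g (t-1), g t, h1, hgl t hlt, fun hgg => ?_⟩
        have := hginj (t-1) (by omega) t hlt hgg
        omega
    have hDne : ∀ t ≤ m, (D t).Nonempty := by
      intro t ht
      obtain ⟨y, z, hy, hz, hyz⟩ := htwo t ht
      by_cases hwy : w = y
      · exact ⟨z, hz, by simp [← hwy] at hyz ⊢; exact fun h => hyz h.symm⟩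
      · exact ⟨y, hy, by simp; exact fun h => hwy h.symm⟩
    have hDconn' : ∀ t ≤ m, ConnectedOn G (D t) := fun t ht => hDconn t ht (hDne t ht)
    refine ⟨(hDne 0 (Nat.zero_le m)).imp (fun y hy => hDsub 0 (Nat.zero_le m) hy), ?_⟩
    have hmemD : ∀ u ∈ U \ {w}, ∃ s ≤ m, u ∈ D s := by
      intro u hu
      obtain ⟨s, hs, hu'⟩ := hmemU u hu.1
      exact ⟨s, hs, hu', hu.2⟩
    by_cases hwg : ∃ t0, t0 < m ∧ w = g t0
    · -- w is one of the link vertices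
      obtain ⟨t0, ht0, hwt0⟩ := hwg
      have hwx : w ≠ x := fun h => hxg t0 ht0 (h ▸ hwt0)
      have hx0' : x ∈ D 0 := ⟨hx0, fun h => hwx (Set.mem_singleton_iff.mp h).symm⟩
      have hxm' : x ∈ D m := ⟨hxm, fun h => hwx (Set.mem_singleton_iff.mp h).symm⟩
      have hlinkD : ∀ t < m, t ≠ t0 → g t ∈ D t ∩ D (t+1) := by
        intro t ht htne
        have hgw : g t ∉ ({w} : Set V) := by
          simp only [Set.mem_singleton_iff]
          intro h
          exact htne (hginj t ht t0 ht0 (h.trans hwt0))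
        exact ⟨⟨hgl t ht, hgw⟩, ⟨hgr t ht, hgw⟩⟩
      have key : ∀ s ≤ m, ∀ u ∈ D s, ReachableWithin G (U \ {w}) x u := by
        intro s hs u hu
        by_cases hst0 : s ≤ t0
        · exact chain_rw G D (U \ {w}) 0 s (Nat.zero_le s)
            (fun t _ ht' => hDconn' t (ht'.trans hs))
            (fun t _ ht' => hDsub t (ht'.trans hs))
            (fun t _ ht' => ⟨g t, hlinkD t (by omega) (by omega)⟩)
            x hx0' u hu
        · exact RW.symm (chain_rw G D (U \ {w}) s m hs
            (fun t ht ht' => hDconn' t ht')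
            (fun t ht ht' => hDsub t ht')
            (fun t ht ht' => ⟨g t, hlinkD t ht' (by omega)⟩)
            u hu x hxm')
      intro u hu v hv
      obtain ⟨s, hs, hu'⟩ := hmemD u hu
      obtain ⟨t, ht, hv'⟩ := hmemD v hv
      exact RW.trans (RW.symm (key s hs u hu')) (key t ht v hv')
    · -- all link vertices survive
      push_neg at hwg
      have hg0 : g 0 ∈ D 0 := ⟨hgl 0 hm, by
        simp only [Set.mem_singleton_iff]; exact fun h => hwg 0 hm h.symm⟩
      have key : ∀ s ≤ m, ∀ u ∈ D s, ReachableWithin G (U \ {w}) (g 0) u := by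
        intro s hs u hu
        refine chain_rw G D (U \ {w}) 0 s (Nat.zero_le s)
          (fun t _ ht' => hDconn' t (ht'.trans hs))
          (fun t _ ht' => hDsub t (ht'.trans hs))
          (fun t _ ht' => ⟨g t, ?_⟩)
          (g 0) hg0 u hu
        have hgw : g t ∉ ({w} : Set V) := by
          simp only [Set.mem_singleton_iff]
          exact fun h => hwg t (by omega) h.symm
        exact ⟨⟨hgl t (by omega), hgw⟩, ⟨hgr t (by omega), hgw⟩⟩
      intro u hu v hv
      obtain ⟨s, hs, hu'⟩ := hmemD u hu
      obtain ⟨t, ht, hv'⟩ := hmemD v hv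
      exact RW.trans (RW.symm (key s hs u hu')) (key t ht v hv')

theorem sep_aux (G : SimpleGraph V) (K : ℕ) (Bl : ℕ → Set V) (c : ℕ → V)
    (hBl : ∀ t ≤ K + 1, IsBlock G (Bl t))
    (hcl : ∀ t ≤ K, c t ∈ Bl t) (hcr : ∀ t ≤ K, c t ∈ Bl (t+1))
    (hBinj : ∀ s ≤ K+1, ∀ t ≤ K+1, Bl s = Bl t → s = t)
    (hcinj : ∀ s ≤ K, ∀ t ≤ K, c s = c t → s = t) :
    ∀ d, 1 ≤ d → ∀ j, j + d ≤ K + 1 → ∀ x, x ∈ Bl j → x ∈ Bl (j + d) → d = 1 ∧ x = c j := by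
  intro d
  induction d using Nat.strong_induction_on with
  | _ d ih =>
    intro hd j hjd x hxj hxjd
    have maxi : ∀ m, 1 ≤ m → j + m ≤ K + 1 →
        ¬ BiconnectedOn G (⋃ t ∈ Set.Iic m, Bl (j + t)) := by
      intro m hm hjm hbic
      set U := ⋃ t ∈ Set.Iic m, Bl (j + t) with hU
      have hsub : Bl j ⊆ U := by
        have h0 : Bl (j + 0) ⊆ U :=
          Set.subset_biUnion_of_mem (u := fun t => Bl (j + t))
            (Set.mem_Iic.mpr (Nat.zero_le m))
        simpa using h0
      have hUeq : U = Bl j := (hBl j (by omega)).2 U hsub hbic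
      have hsub2 : Bl (j + m) ⊆ U :=
        Set.subset_biUnion_of_mem (u := fun t => Bl (j + t)) (Set.mem_Iic.mpr le_rfl)
      rw [hUeq] at hsub2
      have heq := (hBl (j+m) (by omega)).2 (Bl j) hsub2 (hBl j (by omega)).1
      have := hBinj j (by omega) (j+m) (by omega) heq
      omega
    by_cases hd1 : d = 1
    · subst hd1
      refine ⟨rfl, ?_⟩
      by_contra hne
      apply maxi 1 le_rfl hjd
      refine cycle_bic G 1 le_rfl (fun t => Bl (j + t))
        (fun t ht => (hBl (j+t) (by omega)).1)
        (fun t => c (j + t))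
        (fun t ht => hcl (j+t) (by omega))
        (fun t ht => hcr (j+t) (by omega))
        x hxj hxjd
        (fun t ht hx => ?_)
        (fun s hs t ht hg => by omega)
      have ht0 : t = 0 := by omega
      subst ht0
      exact hne hx
    · have hd2 : 2 ≤ d := by omega
      exfalso
      have hxg : ∀ t < d, x ≠ c (j + t) := by
        intro t ht hx
        rcases Nat.eq_zero_or_pos t with h0 | hpos
        · subst h0
          have h1 : x ∈ Bl (j + 1) := by rw [hx]; exact hcr j (by omega)
          have h2 : x ∈ Bl (j + 1 + (d-1)) := by
            have e : j + 1 + (d - 1) = j + d := by omega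
            rw [e]; exact hxjd
          obtain ⟨he1, he2⟩ := ih (d-1) (by omega) (by omega) (j+1) (by omega) x h1 h2
          have hcc : c j = c (j+1) := by
            have hx' : x = c j := by simpa using hx
            exact hx'.symm.trans he2
          have := hcinj j (by omega) (j+1) (by omega) hcc
          omega
        · have h2 : x ∈ Bl (j + t) := by rw [hx]; exact hcl (j+t) (by omega)
          obtain ⟨he1, he2⟩ := ih t ht hpos j (by omega) x hxj h2
          subst he1
          have := hcinj j (by omega) (j+1) (by omega) (he2.symm.trans hx)
          omega
      apply maxi d (by omega) hjd
      refine cycle_bic G d (by omega) (fun t => Bl (j + t))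
        (fun t ht => (hBl (j+t) (by omega)).1)
        (fun t => c (j + t))
        (fun t ht => hcl (j+t) (by omega))
        (fun t ht => hcr (j+t) (by omega))
        x hxj hxjd hxg
        (fun s hs t ht hg => by
          have := hcinj (j+s) (by omega) (j+t) (by omega) hg
          omega)

theorem partA (G : SimpleGraph V) (a b : V) (K : ℕ) (Bl : ℕ → Set V) (c : ℕ → V)
    (hBl : ∀ t ≤ K + 1, IsBlock G (Bl t))
    (hcl : ∀ t ≤ K, c t ∈ Bl t) (hcr : ∀ t ≤ K, c t ∈ Bl (t+1))
    (hBinj : ∀ s ≤ K+1, ∀ t ≤ K+1, Bl s = Bl t → s = t)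
    (hcinj : ∀ s ≤ K, ∀ t ≤ K, c s = c t → s = t)
    (ha : a ∈ Bl 0) (hb : b ∈ Bl (K+1))
    (i : ℕ) (hi : i + 1 ≤ K) :
    ∃ Q : (addEdge G a b).Walk (c i) (c (i+1)), Q.IsPath ∧
      {x | x ∈ Q.support} ∩ Bl (i+1) = {c i, c (i+1)} := by
  classical
  have sep := sep_aux G K Bl c hBl hcl hcr hBinj hcinj
  have hK1 : 1 ≤ K := by omega
  -- a ≠ b
  have hne : a ≠ b := by
    intro h
    have hb' : a ∈ Bl (0 + (K+1)) := by simpa [h] using hb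
    have := sep (K+1) (by omega) 0 (by omega) a ha hb'
    omega
  set UL : Set V := ⋃ t ∈ Set.Iic i, Bl t with hUL
  set UR : Set V := ⋃ t ∈ Set.Icc (i+2) (K+1), Bl t with hUR
  have hULs : ∀ t ≤ i, Bl t ⊆ UL := fun t ht =>
    Set.subset_biUnion_of_mem (u := Bl) (Set.mem_Iic.mpr ht)
  have hURs : ∀ t, i+2 ≤ t → t ≤ K+1 → Bl t ⊆ UR := fun t ht ht' =>
    Set.subset_biUnion_of_mem (u := Bl) (Set.mem_Icc.mpr ⟨ht, ht'⟩)
  have RWa : ReachableWithin G UL a (c i) :=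
    chain_rw G Bl UL 0 i (Nat.zero_le i)
      (fun t _ ht' => (hBl t (by omega)).1.1)
      (fun t _ ht' => hULs t ht')
      (fun t _ ht' => ⟨c t, hcl t (by omega), hcr t (by omega)⟩)
      a ha (c i) (hcl i (by omega))
  have RWb : ReachableWithin G UR (c (i+1)) b :=
    chain_rw G Bl UR (i+2) (K+1) (by omega)
      (fun t ht ht' => (hBl t (by omega)).1.1)
      (fun t ht ht' => hURs t ht ht')
      (fun t ht ht' => ⟨c t, hcl t (by omega), hcr t (by omega)⟩)
      (c (i+1)) (hcr (i+1) (by omega)) b hb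
  obtain ⟨p1, hp1⟩ := RW.symm RWa
  obtain ⟨p2, hp2⟩ := RW.symm RWb
  have hle : G ≤ addEdge G a b := le_sup_left
  have hedges : ∀ {u v : V} (p : G.Walk u v), ∀ e ∈ p.edges, e ∈ (addEdge G a b).edgeSet :=
    fun p e he => SimpleGraph.edgeSet_mono hle (p.edges_subset_edgeSet he)
  have hab : (addEdge G a b).Adj a b := by
    refine Or.inr ?_
    rw [SimpleGraph.fromEdgeSet_adj]
    exact ⟨rfl, hne⟩
  set Wlk : (addEdge G a b).Walk (c i) (c (i+1)) :=
    (p1.transfer _ (hedges p1)).append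
      (SimpleGraph.Walk.cons hab (p2.transfer _ (hedges p2))) with hWlk
  refine ⟨Wlk.bypass, Wlk.bypass_isPath, ?_⟩
  have hsupW : ∀ x ∈ Wlk.support, x ∈ UL ∪ UR := by
    intro x hx
    rw [hWlk, SimpleGraph.Walk.mem_support_append_iff] at hx
    rcases hx with hx | hx
    · rw [SimpleGraph.Walk.support_transfer] at hx
      exact Or.inl (hp1 x hx)
    · rw [SimpleGraph.Walk.support_cons, List.mem_cons] at hx
      rcases hx with rfl | hx
      · exact Or.inl (hULs 0 (Nat.zero_le i) ha)
      · rw [SimpleGraph.Walk.support_transfer] at hx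
        exact Or.inr (hp2 x hx)
  ext x
  simp only [Set.mem_inter_iff, Set.mem_setOf_eq, Set.mem_insert_iff, Set.mem_singleton_iff]
  constructor
  · rintro ⟨hxQ, hxB⟩
    have hxW := Wlk.support_bypass_subset hxQ
    rcases hsupW x hxW with hx | hx
    · simp only [hUL, Set.mem_iUnion, Set.mem_Iic] at hx
      obtain ⟨t, ht, hxt⟩ := hx
      have h2 : x ∈ Bl (t + (i + 1 - t)) := by
        have e : t + (i + 1 - t) = i + 1 := by omega
        rw [e]; exact hxB
      obtain ⟨he1, he2⟩ := sep (i + 1 - t) (by omega) t (by omega) x hxt h2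
      have : t = i := by omega
      subst this
      exact Or.inl he2
    · simp only [hUR, Set.mem_iUnion, Set.mem_Icc] at hx
      obtain ⟨t, ⟨ht1, ht2⟩, hxt⟩ := hx
      have h2 : x ∈ Bl ((i+1) + (t - (i+1))) := by
        have e : (i+1) + (t - (i+1)) = t := by omega
        rw [e]; exact hxt
      obtain ⟨he1, he2⟩ := sep (t - (i+1)) (by omega) (i+1) (by omega) x hxB h2
      exact Or.inr he2
  · rintro (rfl | rfl)
    · exact ⟨Wlk.bypass.start_mem_support, hcr i (by omega)⟩
    · exact ⟨Wlk.bypass.end_mem_support, hcl (i+1) (by omega)⟩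

section PartTwo
open Set

theorem mem_support_of_mem_edges' {H : SimpleGraph V} {u v w : V} (p : H.Walk u v) {e : Sym2 V}
    (he : e ∈ p.edges) (hw : w ∈ e) : w ∈ p.support := by
  induction e with
  | h x y =>
    rcases Sym2.mem_iff.mp hw with rfl | rfl
    · exact p.fst_mem_support_of_mem_edges he
    · exact p.snd_mem_support_of_mem_edges he

theorem path_symm_inj {X : Type*} [TopologicalSpace X] {x y : X} {γ : Path x y}
    (h : Function.Injective ⇑γ) : Function.Injective ⇑γ.symm := by
  intro t s hts
  have : γ (unitInterval.symm t) = γ (unitInterval.symm s) := hts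
  have := h this
  have := congrArg unitInterval.symm this
  simpa [unitInterval.symm_symm] using this

theorem path_symm_range {X : Type*} [TopologicalSpace X] {x y : X} (γ : Path x y) :
    Set.range ⇑γ.symm = Set.range ⇑γ := by
  ext z
  constructor
  · rintro ⟨t, rfl⟩; exact ⟨unitInterval.symm t, rfl⟩
  · rintro ⟨t, rfl⟩
    exact ⟨unitInterval.symm t, by
      show γ (unitInterval.symm (unitInterval.symm t)) = γ t
      rw [unitInterval.symm_symm]⟩

theorem path_trans_inj {X : Type*} [TopologicalSpace X] {x y z : X}
    {γ₁ : Path x y} {γ₂ : Path y z}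
    (h₁ : Function.Injective ⇑γ₁) (h₂ : Function.Injective ⇑γ₂)
    (hint : Set.range ⇑γ₁ ∩ Set.range ⇑γ₂ ⊆ {y}) :
    Function.Injective ⇑(γ₁.trans γ₂) := by
  intro t s hts
  rw [Path.trans_apply, Path.trans_apply] at hts
  split_ifs at hts with ht hs hs
  · have := h₁ hts
    have : (2 : ℝ) * t = 2 * s := by
      have := congrArg (Subtype.val) this; simpa using this
    exact Subtype.ext (by linarith)
  · -- t in first half, s in second half
    exfalso
    have hmem : γ₁ ⟨2 * t, _⟩ ∈ Set.range ⇑γ₁ ∩ Set.range ⇑γ₂ :=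
      ⟨⟨_, rfl⟩, ⟨_, hts.symm⟩⟩
    have hy : γ₁ ⟨2 * (t : ℝ), _⟩ = y := hint hmem
    have h1 : (2 : ℝ) * t = 1 := by
      have := h₁ (hy.trans γ₁.target.symm)
      have := congrArg Subtype.val this; simpa using this
    have hy2 := hts.symm.trans hy
    have h2 : (2 : ℝ) * s - 1 = 0 := by
      have := h₂ (hy2.trans γ₂.source.symm)
      have := congrArg Subtype.val this; simpa using this
    have : (s : ℝ) ≤ 1/2 := by linarith
    exact hs this
  · exfalso
    have hmem : γ₂ ⟨2 * t - 1, _⟩ ∈ Set.range ⇑γ₁ ∩ Set.range ⇑γ₂ :=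
      ⟨⟨_, hts.symm⟩, ⟨_, rfl⟩⟩
    have hy : γ₂ ⟨2 * (t : ℝ) - 1, _⟩ = y := hint hmem
    have h2 : (2 : ℝ) * t - 1 = 0 := by
      have := h₂ (hy.trans γ₂.source.symm)
      have := congrArg Subtype.val this; simpa using this
    have : (t : ℝ) ≤ 1/2 := by linarith
    exact ht this
  · have := h₂ hts
    have : (2 : ℝ) * t - 1 = 2 * s - 1 := by
      have := congrArg (Subtype.val) this; simpa using this
    exact Subtype.ext (by linarith)

theorem path_extend_data {x y : ℝ × ℝ} (γ : Path x y) :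
    ContinuousOn γ.extend (Set.Icc 0 1) ∧
    (Function.Injective ⇑γ → Set.InjOn γ.extend (Set.Icc 0 1)) ∧
    γ.extend 0 = x ∧ γ.extend 1 = y ∧ γ.extend '' Set.Icc 0 1 = Set.range ⇑γ := by
  refine ⟨γ.continuous_extend.continuousOn, ?_, γ.extend_zero, γ.extend_one, ?_⟩
  · intro hinj t ht s hs h
    rw [γ.extend_apply ht, γ.extend_apply hs] at h
    have := hinj h
    exact congrArg Subtype.val this
  · ext z
    constructor
    · rintro ⟨t, ht, rfl⟩
      rw [γ.extend_apply ht]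
      exact ⟨_, rfl⟩
    · rintro ⟨t, rfl⟩
      exact ⟨t, t.2, γ.extend_extends' t⟩

def drawing_mono {G' H : SimpleGraph V} (hle : G' ≤ H)
    (D : PlanarDrawingOn H Set.univ) : PlanarDrawingOn G' Set.univ where
  pos := D.pos
  pos_inj := D.pos_inj
  arc := D.arc
  arc_spec := fun u v hu hv huv => D.arc_spec hu hv (hle huv)
  arc_inter := fun e₁ e₂ he₁ he₂ h₁ h₂ hne =>
    D.arc_inter (SimpleGraph.edgeSet_mono hle he₁) (SimpleGraph.edgeSet_mono hle he₂) h₁ h₂ hne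
  pos_arc := fun e he h v hv hp => D.pos_arc (SimpleGraph.edgeSet_mono hle he) h v hv hp

theorem glue_walk {H : SimpleGraph V} (D : PlanarDrawingOn H Set.univ) :
    ∀ {u v : V} (p : H.Walk u v), p.IsPath → u ≠ v →
    ∃ γ : Path (D.pos u) (D.pos v), Function.Injective ⇑γ ∧
      Set.range ⇑γ = ⋃ e ∈ p.edges, D.arc e := by
  intro u v p
  induction p with
  | nil => intro _ hne; exact absurd rfl hne
  | @cons u u' v h q ih =>
    intro hp hne
    have hq : q.IsPath := ((SimpleGraph.Walk.cons_isPath_iff h q).mp hp).1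
    have hu : u ∉ q.support := ((SimpleGraph.Walk.cons_isPath_iff h q).mp hp).2
    -- the drawn edge u-u'
    obtain ⟨f, hfc, hfi, hf0, hf1, hfim⟩ :=
      D.arc_spec (Set.mem_univ u) (Set.mem_univ u') h
    have huu' : u ≠ u' := h.ne
    set γe : Path (D.pos u) (D.pos u') :=
      { toFun := (Set.Icc (0:ℝ) 1).restrict f
        continuous_toFun := hfc.restrict
        source' := by show f ((0 : unitInterval) : ℝ) = _; simpa using hf0
        target' := by show f ((1 : unitInterval) : ℝ) = _; simpa using hf1 } with hγe
    have hγeinj : Function.Injective ⇑γe := by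
      intro t s hts
      exact Subtype.ext (hfi t.2 s.2 hts)
    have hγerange : Set.range ⇑γe = D.arc s(u, u') := by
      rw [← hfim]
      exact Set.range_restrict f (Set.Icc 0 1)
    by_cases huv' : u' = v
    · subst huv'
      have hqnil : q = SimpleGraph.Walk.nil := SimpleGraph.Walk.isPath_iff_eq_nil.mp hq
      subst hqnil
      refine ⟨γe, hγeinj, ?_⟩
      simp [hγerange]
    · obtain ⟨γq, hγqinj, hγqrange⟩ := ih hq huv'
      have hint : Set.range ⇑γe ∩ Set.range ⇑γq ⊆ {D.pos u'} := by
        rintro z ⟨hz1, hz2⟩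
        rw [hγerange] at hz1
        rw [hγqrange] at hz2
        simp only [Set.mem_iUnion] at hz2
        obtain ⟨e', he', hz2⟩ := hz2
        have hne' : s(u, u') ≠ e' := by
          intro hee
          exact hu (mem_support_of_mem_edges' q (hee ▸ he') (Sym2.mem_mk_left u u'))
        have := D.arc_inter ((H.mem_edgeSet).mpr h) (q.edges_subset_edgeSet he')
          (fun x _ => Set.mem_univ x) (fun x _ => Set.mem_univ x) hne' ⟨hz1, hz2⟩
        obtain ⟨v0, _, hv0e, hv0e', rfl⟩ := this
        have hv0 : v0 = u ∨ v0 = u' := Sym2.mem_iff.mp hv0e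
        rcases hv0 with rfl | rfl
        · exact absurd (mem_support_of_mem_edges' q he' hv0e') hu
        · rfl
      refine ⟨γe.trans γq, path_trans_inj hγeinj hγqinj hint, ?_⟩
      rw [Path.trans_range, hγerange, hγqrange]
      ext z
      simp only [SimpleGraph.Walk.edges_cons, List.mem_cons, Set.mem_union, Set.mem_iUnion,
        exists_prop]
      constructor
      · rintro (hz | hz)
        · exact ⟨s(u,u'), Or.inl rfl, hz⟩
        · obtain ⟨e, he, hz⟩ := hz
          exact ⟨e, Or.inr he, hz⟩
      · rintro ⟨e, (rfl | he), hz⟩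
        · exact Or.inl hz
        · exact Or.inr ⟨e, he, hz⟩

theorem sym2_eq_cc' {c c' : V} (e : Sym2 V) (hd : ¬ e.IsDiag)
    (h : ∀ x ∈ e, x = c ∨ x = c') : e = s(c, c') := by
  induction e with
  | h x y =>
    have hx := h x (Sym2.mem_mk_left x y)
    have hy := h y (Sym2.mem_mk_right x y)
    have hxy : x ≠ y := by simpa using hd
    rcases hx with rfl | rfl <;> rcases hy with h' | h'
    · exact absurd h'.symm hxy
    · rw [h']
    · rw [h']; exact Sym2.eq_swap
    · exact absurd h'.symm hxy

theorem partB [Fintype V] (G : SimpleGraph V) (a b : V) (B : Set V) (c c' : V)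
    (hcB : c ∈ B) (hc'B : c' ∈ B) (hcc' : c ≠ c')
    (Q : (addEdge G a b).Walk c c') (hQp : Q.IsPath)
    (hQB : ∀ x, x ∈ Q.support → x ∈ B → x = c ∨ x = c')
    (hplanar : (addEdge G a b).IsPlanar) :
    (addEdge (inducedOn G B) c c').IsPlanar := by
  classical
  obtain ⟨D⟩ := hplanar
  by_cases hadj : G.Adj c c'
  · -- the added edge is already present: subgraph of a planar graph
    refine ⟨drawing_mono ?_ D⟩
    intro u v huv
    rcases huv with huv | huv
    · rcases (SimpleGraph.fromRel_adj _ u v).mp huv with ⟨hne, h | h⟩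
      · exact Or.inl h.2.2
      · exact Or.inl h.2.2.symm
    · rcases (SimpleGraph.fromEdgeSet_adj _).mp huv with ⟨he, hne⟩
      simp only [Set.mem_singleton_iff] at he
      rcases Sym2.eq_iff.mp he with ⟨rfl, rfl⟩ | ⟨rfl, rfl⟩
      · exact Or.inl hadj
      · exact Or.inl hadj.symm
  · obtain ⟨γ, hγinj, hγrange⟩ := glue_walk D Q hQp hcc'
    have harc_cpt : ∀ e ∈ (addEdge G a b).edgeSet, Bornology.IsBounded (D.arc e) := by
      intro e
      induction e with
      | h x y =>
        intro he
        obtain ⟨f, hfc, _, _, _, hfim⟩ :=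
          D.arc_spec (Set.mem_univ x) (Set.mem_univ y) (((addEdge G a b).mem_edgeSet).mp he)
        rw [← hfim]
        exact (isCompact_Icc.image_of_continuousOn hfc).isBounded
    have hSbd : Bornology.IsBounded (Set.range D.pos ∪ ⋃ e ∈ (addEdge G a b).edgeSet, D.arc e) := by
      refine (Set.finite_range D.pos).isBounded.union ?_
      exact (Bornology.isBounded_biUnion (Set.toFinite (addEdge G a b).edgeSet)).mpr harc_cpt
    obtain ⟨r, hr⟩ := (Metric.isBounded_iff_subset_closedBall 0).mp hSbd
    set R := max r 0 with hR
    have hRnn : (0:ℝ) ≤ R := le_max_right r 0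
    have hnorm : ∀ z ∈ Set.range D.pos ∪ ⋃ e ∈ (addEdge G a b).edgeSet, D.arc e, ‖z‖ ≤ R := by
      intro z hz
      have := hr hz
      rw [Metric.mem_closedBall, dist_zero_right] at this
      exact this.trans (le_max_left r 0)
    have hposR : ∀ v : V, ‖D.pos v‖ ≤ R := fun v => hnorm _ (Or.inl ⟨v, rfl⟩)
    have harcR : ∀ e ∈ (addEdge G a b).edgeSet, ∀ z ∈ D.arc e, ‖z‖ ≤ R := by
      intro e he z hz
      refine hnorm z (Or.inr ?_)
      simp only [Set.mem_iUnion, exists_prop]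
      exact ⟨e, he, hz⟩
    set ι : V → ℝ := fun v => ((Fintype.equivFin V v : ℕ) : ℝ) with hι
    have hιinj : Function.Injective ι := by
      intro u v h
      have h2 : ((Fintype.equivFin V u : ℕ) : ℕ) = ((Fintype.equivFin V v : ℕ) : ℕ) :=
        Nat.cast_injective h
      exact (Fintype.equivFin V).injective (Fin.val_injective h2)
    have hιnn : ∀ v, 0 ≤ ι v := fun v => Nat.cast_nonneg _
    set pos' : V → ℝ × ℝ := fun v => if v ∈ B then D.pos v else (R + 1 + ι v, 0) with hpos'
    have hposB : ∀ v ∈ B, pos' v = D.pos v := by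
      intro v hv; rw [hpos']; simp [hv]
    have hposNB : ∀ v, v ∉ B → pos' v = (R + 1 + ι v, 0) := by
      intro v hv; rw [hpos']; simp [hv]
    have houtnorm : ∀ v : V, R < ‖((R + 1 + ι v : ℝ), (0:ℝ))‖ := by
      intro v
      rw [Prod.norm_def]
      have h1 : ‖(R + 1 + ι v : ℝ)‖ = R + 1 + ι v := by
        rw [Real.norm_eq_abs, abs_of_nonneg]; linarith [hιnn v]
      have h2 : R < ‖(R + 1 + ι v : ℝ)‖ := by rw [h1]; linarith [hιnn v]
      exact h2.trans_le (le_max_left _ _)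
    have hγR : ∀ z ∈ Set.range ⇑γ, ‖z‖ ≤ R := by
      intro z hz
      rw [hγrange] at hz
      simp only [Set.mem_iUnion, exists_prop] at hz
      obtain ⟨e, he, hz⟩ := hz
      exact harcR e (Q.edges_subset_edgeSet he) z hz
    have hQedgeH : ∀ e ∈ Q.edges, e ∈ (addEdge G a b).edgeSet := fun e he => Q.edges_subset_edgeSet he
    have hindB : ∀ u v : V, (inducedOn G B).Adj u v → u ∈ B ∧ v ∈ B ∧ G.Adj u v := by
      intro u v huv
      rcases (SimpleGraph.fromRel_adj _ u v).mp huv with ⟨hne, h | h⟩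
      · exact h
      · exact ⟨h.2.1, h.1, h.2.2.symm⟩
    have hG2e : ∀ e ∈ (addEdge (inducedOn G B) c c').edgeSet,
        e = s(c, c') ∨ (e ∈ (addEdge G a b).edgeSet ∧ e ≠ s(c,c') ∧ ∀ x ∈ e, x ∈ B) := by
      intro e he
      have he2 : e ∈ (inducedOn G B).edgeSet ∪ (SimpleGraph.fromEdgeSet {s(c,c')}).edgeSet := by
        rw [← SimpleGraph.edgeSet_sup]; exact he
      rcases he2 with he' | he'
      · refine Or.inr ?_
        have hBe : ∀ x ∈ e, x ∈ B := by
          intro x hx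
          induction e with
          | h x1 y1 =>
            obtain ⟨h1, h2, h3⟩ := hindB x1 y1 (((inducedOn G B).mem_edgeSet).mp he')
            rcases Sym2.mem_iff.mp hx with rfl | rfl
            · exact h1
            · exact h2
        have heG : e ∈ G.edgeSet := by
          induction e with
          | h x1 y1 =>
            exact (G.mem_edgeSet).mpr (hindB x1 y1 (((inducedOn G B).mem_edgeSet).mp he')).2.2
        have hnecc : e ≠ s(c, c') := by
          rintro rfl
          exact hadj ((G.mem_edgeSet).mp heG)
        exact ⟨SimpleGraph.edgeSet_mono le_sup_left heG, hnecc, hBe⟩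
      · rw [SimpleGraph.edgeSet_fromEdgeSet] at he'
        exact Or.inl (by simpa using he'.1)
    set arc' : Sym2 V → Set (ℝ × ℝ) :=
      fun e => if e = s(c,c') then Set.range ⇑γ else D.arc e with harc'
    have harcc : arc' s(c,c') = Set.range ⇑γ := by rw [harc']; simp
    have harcold : ∀ e, e ≠ s(c,c') → arc' e = D.arc e := by
      intro e h; rw [harc']; simp [h]
    have cross : ∀ e, e ∈ (addEdge G a b).edgeSet → (∀ x ∈ e, x ∈ B) → e ≠ s(c,c') →
        ∀ z, z ∈ D.arc e → z ∈ Set.range ⇑γ →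
        ∃ v0, v0 ∈ e ∧ v0 ∈ s(c,c') ∧ z = D.pos v0 ∧ v0 ∈ B := by
      intro e heH hBe hnecc z hz hzγ
      rw [hγrange] at hzγ
      simp only [Set.mem_iUnion, exists_prop] at hzγ
      obtain ⟨e', he', hz'⟩ := hzγ
      have hnee' : e ≠ e' := by
        rintro rfl
        refine hnecc (sym2_eq_cc' e ((addEdge G a b).not_isDiag_of_mem_edgeSet heH) ?_)
        intro x hx
        exact hQB x (mem_support_of_mem_edges' Q he' hx) (hBe x hx)
      obtain ⟨v0, _, hv0e, hv0e', hzeq⟩ := D.arc_inter heH (hQedgeH e' he')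
        (fun x _ => Set.mem_univ x) (fun x _ => Set.mem_univ x) hnee' ⟨hz, hz'⟩
      have hv0B : v0 ∈ B := hBe v0 hv0e
      have hv0s : v0 ∈ Q.support := mem_support_of_mem_edges' Q he' hv0e'
      refine ⟨v0, hv0e, ?_, hzeq, hv0B⟩
      rcases hQB v0 hv0s hv0B with rfl | rfl
      · exact Sym2.mem_mk_left _ _
      · exact Sym2.mem_mk_right _ _
    refine ⟨{ pos := pos', pos_inj := ?_, arc := arc',
              arc_spec := ?_, arc_inter := ?_, pos_arc := ?_ }⟩
    · -- pos_inj
      intro u _ v _ h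
      by_cases huB : u ∈ B <;> by_cases hvB : v ∈ B
      · rw [hposB u huB, hposB v hvB] at h
        exact D.pos_inj (Set.mem_univ u) (Set.mem_univ v) h
      · exfalso
        rw [hposB u huB, hposNB v hvB] at h
        have h2 := houtnorm v
        rw [← h] at h2
        exact absurd (hposR u) (not_le.mpr h2)
      · exfalso
        rw [hposNB u huB, hposB v hvB] at h
        have h2 := houtnorm u
        rw [h] at h2
        exact absurd (hposR v) (not_le.mpr h2)
      · rw [hposNB u huB, hposNB v hvB] at h
        have h2 : R + 1 + ι u = R + 1 + ι v := congrArg Prod.fst h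
        exact hιinj (by linarith)
    · -- arc_spec
      intro u v _ _ huv
      rcases huv with huv | huv
      · obtain ⟨huB, hvB, hGuv⟩ := hindB u v huv
        have hne' : s(u,v) ≠ s(c,c') := by
          intro hh
          rcases Sym2.eq_iff.mp hh with ⟨rfl, rfl⟩ | ⟨rfl, rfl⟩
          · exact hadj hGuv
          · exact hadj hGuv.symm
        obtain ⟨f, h1, h2, h3, h4, h5⟩ := D.arc_spec (Set.mem_univ u) (Set.mem_univ v)
          (Or.inl hGuv : (addEdge G a b).Adj u v)
        refine ⟨f, h1, h2, ?_, ?_, ?_⟩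
        · rw [h3, hposB u huB]
        · rw [h4, hposB v hvB]
        · rw [harcold _ hne']; exact h5
      · rcases (SimpleGraph.fromEdgeSet_adj _).mp huv with ⟨he, hne⟩
        simp only [Set.mem_singleton_iff] at he
        rcases Sym2.eq_iff.mp he with ⟨rfl, rfl⟩ | ⟨rfl, rfl⟩
        · obtain ⟨e1, e2, e3, e4, e5⟩ := path_extend_data γ
          refine ⟨γ.extend, e1, e2 hγinj, ?_, ?_, ?_⟩
          · rw [e3, hposB u hcB]
          · rw [e4, hposB v hc'B]
          · rw [e5]; exact harcc.symm
        · obtain ⟨e1, e2, e3, e4, e5⟩ := path_extend_data γ.symm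
          refine ⟨γ.symm.extend, e1, e2 (path_symm_inj hγinj), ?_, ?_, ?_⟩
          · rw [e3, hposB u hc'B]
          · rw [e4, hposB v hcB]
          · have hsw : s(u, v) = s(v, u) := Sym2.eq_swap
            rw [e5, path_symm_range, hsw, harcc]
    · -- arc_inter
      intro e1 e2 he1 he2 _ _ hne12 z hz
      obtain ⟨hz1, hz2⟩ := hz
      rcases hG2e e1 he1 with he1' | ⟨he1H, hne1, hB1⟩
      · rcases hG2e e2 he2 with he2' | ⟨he2H, hne2, hB2⟩
        · exact absurd (he1'.trans he2'.symm) hne12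
        · rw [he1', harcc] at hz1
          rw [harcold _ hne2] at hz2
          obtain ⟨v0, hv0e2, hv0cc, hzeq, hv0B⟩ := cross e2 he2H hB2 hne2 z hz2 hz1
          exact ⟨v0, Set.mem_univ v0, he1' ▸ hv0cc, hv0e2,
            by rw [hzeq, hposB v0 hv0B]⟩
      · rcases hG2e e2 he2 with he2' | ⟨he2H, hne2, hB2⟩
        · rw [he2', harcc] at hz2
          rw [harcold _ hne1] at hz1
          obtain ⟨v0, hv0e1, hv0cc, hzeq, hv0B⟩ := cross e1 he1H hB1 hne1 z hz1 hz2
          exact ⟨v0, Set.mem_univ v0, hv0e1, he2' ▸ hv0cc,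
            by rw [hzeq, hposB v0 hv0B]⟩
        · rw [harcold _ hne1] at hz1
          rw [harcold _ hne2] at hz2
          obtain ⟨v0, _, hv0e1, hv0e2, hzeq⟩ := D.arc_inter he1H he2H
            (fun x _ => Set.mem_univ x) (fun x _ => Set.mem_univ x) hne12 ⟨hz1, hz2⟩
          have hv0B : v0 ∈ B := hB1 v0 hv0e1
          exact ⟨v0, Set.mem_univ v0, hv0e1, hv0e2, by rw [hzeq, hposB v0 hv0B]⟩
    · -- pos_arc
      intro e he _ v _ hv
      by_cases hvB : v ∈ B
      · rcases hG2e e he with he' | ⟨heH, hnee, hBe⟩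
        · rw [he', harcc, hposB v hvB] at hv
          rw [hγrange] at hv
          simp only [Set.mem_iUnion, exists_prop] at hv
          obtain ⟨e', he'', hv'⟩ := hv
          have hve' := D.pos_arc (hQedgeH e' he'') (fun x _ => Set.mem_univ x) v
            (Set.mem_univ v) hv'
          have hvs : v ∈ Q.support := mem_support_of_mem_edges' Q he'' hve'
          rw [he']
          rcases hQB v hvs hvB with rfl | rfl
          · exact Sym2.mem_mk_left _ _
          · exact Sym2.mem_mk_right _ _
        · rw [harcold _ hnee, hposB v hvB] at hv
          exact D.pos_arc heH (fun x _ => Set.mem_univ x) v (Set.mem_univ v) hv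
      · exfalso
        have hbound : ‖pos' v‖ ≤ R := by
          rcases hG2e e he with he' | ⟨heH, hnee, hBe⟩
          · rw [he', harcc] at hv
            exact hγR _ hv
          · rw [harcold _ hnee] at hv
            exact harcR e heH _ hv
        rw [hposNB v hvB] at hbound
        exact absurd hbound (not_le.mpr (houtnorm v))

end PartTwo

end Stmt8Aux

/-- For each block `B_i` on the BC-tree path between `a` and `b`,
the graph `G + {a,b}` contains a path `Q` from `c_i` to `c_(i+1)` meeting `B_i`
exactly in `{c_i, c_(i+1)}`; moreover if `G + {a,b}` is planar then
`G[V(B_i)] + {c_i, c_(i+1)}` is planar. -/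
theorem stmt8 {V : Type*} [Fintype V] (G : SimpleGraph V)
    (a b : V) (hconn : G.Reachable a b)
    (hblk : ¬ ∃ B : Set V, IsBlock G B ∧ a ∈ B ∧ b ∈ B)
    (k : ℕ) (bc : BCPath G a b k) (i : Fin k) :
    (∃ Q : (addEdge G a b).Walk (bc.c i.castSucc) (bc.c i.succ),
       Q.IsPath ∧
       {x : V | x ∈ Q.support} ∩ bc.Bl i.succ.castSucc =
         {bc.c i.castSucc, bc.c i.succ}) ∧
    ((addEdge G a b).IsPlanar →
      (addEdge (inducedOn G (bc.Bl i.succ.castSucc))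
        (bc.c i.castSucc) (bc.c i.succ)).IsPlanar) := by
  classical
  set Bl' : ℕ → Set V := fun t => if h : t < k + 2 then bc.Bl ⟨t, h⟩ else ∅ with hBl'
  set c' : ℕ → V := fun t => if h : t < k + 1 then bc.c ⟨t, h⟩ else a with hc'
  have hBl'def : ∀ t (h : t < k + 2), Bl' t = bc.Bl ⟨t, h⟩ := by
    intro t h; rw [hBl']; simp [h]
  have hc'def : ∀ t (h : t < k + 1), c' t = bc.c ⟨t, h⟩ := by
    intro t h; rw [hc']; simp [h]
  have hBl : ∀ t ≤ k + 1, IsBlock G (Bl' t) := by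
    intro t ht
    rw [hBl'def t (by omega)]
    exact bc.isBlock _
  have hcl : ∀ t ≤ k, c' t ∈ Bl' t := by
    intro t ht
    have h1 : t < k + 1 := by omega
    have h2 : t < k + 2 := by omega
    rw [hc'def t h1, hBl'def t h2]
    have h3 := bc.linkL ⟨t, h1⟩
    have he : Fin.castSucc (⟨t, h1⟩ : Fin (k+1)) = (⟨t, h2⟩ : Fin (k+2)) := by
      apply Fin.ext; simp
    rwa [he] at h3
  have hcr : ∀ t ≤ k, c' t ∈ Bl' (t+1) := by
    intro t ht
    have h1 : t < k + 1 := by omega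
    have h2 : t + 1 < k + 2 := by omega
    rw [hc'def t h1, hBl'def (t+1) h2]
    have h3 := bc.linkR ⟨t, h1⟩
    have he : Fin.succ (⟨t, h1⟩ : Fin (k+1)) = (⟨t+1, h2⟩ : Fin (k+2)) := by
      apply Fin.ext; simp
    rwa [he] at h3
  have hBinj : ∀ s ≤ k+1, ∀ t ≤ k+1, Bl' s = Bl' t → s = t := by
    intro s hs t ht h
    rw [hBl'def s (by omega), hBl'def t (by omega)] at h
    have := bc.Bl_inj h
    exact congrArg Fin.val this
  have hcinj : ∀ s ≤ k, ∀ t ≤ k, c' s = c' t → s = t := by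
    intro s hs t ht h
    rw [hc'def s (by omega), hc'def t (by omega)] at h
    have := bc.c_inj h
    exact congrArg Fin.val this
  have ha : a ∈ Bl' 0 := by
    rw [hBl'def 0 (by omega)]
    have he : ((0 : Fin (k+2))) = ⟨0, by omega⟩ := by apply Fin.ext; simp
    rw [← he]
    exact bc.ha
  have hb : b ∈ Bl' (k+1) := by
    rw [hBl'def (k+1) (by omega)]
    have he : (Fin.last (k+1)) = (⟨k+1, by omega⟩ : Fin (k+2)) := by apply Fin.ext; simp
    rw [← he]
    exact bc.hb
  have hik : (i : ℕ) + 1 ≤ k := i.isLt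
  obtain ⟨Q, hQpath, hQset⟩ :=
    Stmt8Aux.partA G a b k Bl' c' hBl hcl hcr hBinj hcinj ha hb i.1 hik
  have ec1 : bc.c i.castSucc = c' i.1 := by
    rw [hc'def i.1 (by omega)]; exact congrArg bc.c (Fin.ext (by simp))
  have ec2 : bc.c i.succ = c' (i.1+1) := by
    rw [hc'def (i.1+1) (by omega)]; exact congrArg bc.c (Fin.ext (by simp))
  have eB : bc.Bl i.succ.castSucc = Bl' (i.1+1) := by
    rw [hBl'def (i.1+1) (by omega)]; exact congrArg bc.Bl (Fin.ext (by simp))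
  rw [ec1, ec2, eB]
  refine ⟨⟨Q, hQpath, hQset⟩, ?_⟩
  intro hpl
  refine Stmt8Aux.partB G a b (Bl' (i.1+1)) (c' i.1) (c' (i.1+1))
    (hcr i.1 (by omega)) (hcl (i.1+1) (by omega)) ?_ Q hQpath ?_ hpl
  · intro h
    have := hcinj i.1 (by omega) (i.1+1) (by omega) h
    omega
  · intro x hx hxB
    have hmem : x ∈ ({c' i.1, c' (i.1+1)} : Set V) := hQset ▸ ⟨hx, hxB⟩
    simpa using hmem
end

section
/- Let G be a graph, let u and v be distinct vertices, and let e be an edge not in G. Then the maximum number of pairwise internally vertex-disjoint paths from u to v in the graph G + e is at most one more than the maximum number of pairwise internally vertex-disjoint paths from u to v in G. (Consequently, inserting or deleting a single edge changes the maximum number of internally vertex-disjoint paths between any two vertices by at most one.) -/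
open SimpleGraph

/-- The graph `G` with the (potential) edge `e` inserted. -/
def addEdgeSym {W : Type*} (G : SimpleGraph W) (e : Sym2 W) : SimpleGraph W :=
  G ⊔ SimpleGraph.fromEdgeSet {e}

/-- A path from `u` to `v` containing the edge `s(u,v)` is that single edge. -/
lemma path_of_mem_edge {V : Type*} {G : SimpleGraph V} {u v : V} (huv : u ≠ v)
    (p : G.Walk u v) (hp : p.IsPath) (h : s(u, v) ∈ p.edges) :
    ∃ ha : G.Adj u v, p = SimpleGraph.Walk.cons ha SimpleGraph.Walk.nil := by
  cases p with
  | nil => simp at h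
  | @cons _ w _ ha q =>
    rw [SimpleGraph.Walk.cons_isPath_iff] at hp
    rw [SimpleGraph.Walk.edges_cons, List.mem_cons] at h
    rcases h with h | h
    · have hw : w = v := by
        rw [Sym2.eq_iff] at h
        rcases h with ⟨_, rfl⟩ | ⟨h1, h2⟩
        · rfl
        · exact absurd h2.symm huv
      subst hw
      have : q = SimpleGraph.Walk.nil := by
        cases q with
        | nil => rfl
        | cons hb r =>
          exact absurd (hp.1.2) (by simp)
      exact ⟨ha, by rw [this]⟩
    · exact absurd (q.fst_mem_support_of_mem_edges h) hp.2

/-- Inserting a single edge increases the maximum number of pairwise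
internally vertex-disjoint `u`–`v` paths by at most one: any `n + 1` pairwise
internally disjoint `u`–`v` paths in `G + e` yield `n` such paths in `G`. -/
theorem stmt13 {V : Type*} [Fintype V] (G : SimpleGraph V) (u v : V) (huv : u ≠ v)
    (e : Sym2 V) (hdiag : ¬ e.IsDiag) (he : e ∉ G.edgeSet) (n : ℕ)
    (P : Fin (n + 1) → (addEdgeSym G e).Walk u v)
    (hpath : ∀ i, (P i).IsPath)
    (hinj : Function.Injective P)
    (hdisj : ∀ i j, i ≠ j → IntDisjoint (addEdgeSym G e) (P i) (P j)) :
    ∃ Q : Fin n → G.Walk u v,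
      (∀ i, (Q i).IsPath) ∧
      Function.Injective Q ∧
      (∀ i j, i ≠ j → IntDisjoint G (Q i) (Q j)) := by
  classical
  -- at most one of the paths uses the edge `e`
  obtain ⟨i₀, hi₀⟩ : ∃ i₀ : Fin (n + 1), ∀ j, j ≠ i₀ → e ∉ (P j).edges := by
    by_cases hex : ∃ i, e ∈ (P i).edges
    · obtain ⟨i₀, hi₀⟩ := hex
      refine ⟨i₀, fun j hj hje => ?_⟩
      -- both endpoints of e lie in both supports, hence in {u, v}
      obtain ⟨a, b⟩ := e
      have ha1 := (P i₀).fst_mem_support_of_mem_edges hi₀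
      have hb1 := (P i₀).snd_mem_support_of_mem_edges hi₀
      have ha2 := (P j).fst_mem_support_of_mem_edges hje
      have hb2 := (P j).snd_mem_support_of_mem_edges hje
      have hab : a ≠ b := by simpa using hdiag
      have hda := hdisj j i₀ hj a ha2 ha1
      have hdb := hdisj j i₀ hj b hb2 hb1
      have heuv : s(a, b) = s(u, v) := by
        rcases hda with rfl | rfl <;> rcases hdb with rfl | rfl
        · exact absurd rfl hab
        · rfl
        · exact Sym2.eq_swap
        · exact absurd rfl hab
      have hi₀' : s(u, v) ∈ (P i₀).edges := by rw [← heuv]; exact hi₀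
      have hje' : s(u, v) ∈ (P j).edges := by rw [← heuv]; exact hje
      obtain ⟨h1, e1⟩ := path_of_mem_edge huv (P i₀) (hpath i₀) hi₀'
      obtain ⟨h2, e2⟩ := path_of_mem_edge huv (P j) (hpath j) hje'

      exact hj (hinj (e2.trans e1.symm))
    · push_neg at hex
      exact ⟨0, fun j _ => hex j⟩
  -- the other n paths avoid e, hence live in G
  have hG : ∀ j : Fin n, ∀ e' ∈ (P (i₀.succAbove j)).edges, e' ∈ G.edgeSet := by
    intro j e' he'
    have h1 : e' ∈ (addEdgeSym G e).edgeSet := (P _).edges_subset_edgeSet he'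
    have h2 : e' ≠ e := fun h => hi₀ _ (Fin.succAbove_ne i₀ j) (h ▸ he')
    rw [addEdgeSym, SimpleGraph.edgeSet_sup, SimpleGraph.edgeSet_fromEdgeSet] at h1
    rcases h1 with h1 | h1
    · exact h1
    · exact absurd h1.1 (by simpa using h2)
  refine ⟨fun j => (P (i₀.succAbove j)).transfer G (hG j), fun j => (hpath _).transfer _,
    fun j k hjk => ?_, fun j k hjk x hx1 hx2 => ?_⟩
  · have : P (i₀.succAbove j) = P (i₀.succAbove k) := by
      have := congrArg (fun w : G.Walk u v => w.transfer (addEdgeSym G e)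
        (fun e' he' => Set.mem_of_subset_of_mem (SimpleGraph.edgeSet_mono le_sup_left) (w.edges_subset_edgeSet he'))) hjk
      simpa only [SimpleGraph.Walk.transfer_transfer, SimpleGraph.Walk.transfer_self] using this
    exact Fin.succAbove_right_injective (hinj this)
  · rw [SimpleGraph.Walk.support_transfer] at hx1 hx2
    exact hdisj _ _ (fun h => hjk (Fin.succAbove_right_injective h)) x hx1 hx2
end

section
/- Let G be a graph and let u, v be distinct vertices that are connected in G. Then u and v lie in a common block (maximal biconnected subgraph) of G if and only if for every vertex w ∉ {u, v}, the vertices u and v are connected in G − {w} (the graph with the vertex w and all edges incident to it deleted). -/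
open SimpleGraph

section Helpers

variable {V : Type*} {G : SimpleGraph V} {A B : Set V} {u v z : V}

lemma rw_refl (h : u ∈ A) : ReachableWithin G A u u :=
  ⟨SimpleGraph.Walk.nil, by simpa using h⟩

lemma rw_symm (h : ReachableWithin G A u v) : ReachableWithin G A v u := by
  obtain ⟨p, hp⟩ := h
  exact ⟨p.reverse, fun x hx => hp x (by simpa [Walk.support_reverse] using hx)⟩

lemma rw_trans (h1 : ReachableWithin G A u v) (h2 : ReachableWithin G A v z) :
    ReachableWithin G A u z := by
  obtain ⟨p, hp⟩ := h1; obtain ⟨q, hq⟩ := h2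
  refine ⟨p.append q, fun x hx => ?_⟩
  rcases (Walk.mem_support_append_iff _ _).1 hx with h | h
  exacts [hp x h, hq x h]

lemma rw_mono (hAB : A ⊆ B) (h : ReachableWithin G A u v) : ReachableWithin G B u v := by
  obtain ⟨p, hp⟩ := h
  exact ⟨p, fun x hx => hAB (hp x hx)⟩

lemma rw_adj (h : G.Adj u v) (hu : u ∈ A) (hv : v ∈ A) : ReachableWithin G A u v := by
  refine ⟨Walk.cons h Walk.nil, fun x hx => ?_⟩
  simp only [Walk.support_cons, Walk.support_nil, List.mem_cons, List.mem_singleton] at hx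
  rcases hx with rfl | rfl | h'
  · exact hu
  · exact hv
  · exact absurd h' (List.not_mem_nil (a := x))

lemma connectedOn_hub (c : V) (hc : c ∈ A) (h : ∀ z ∈ A, ReachableWithin G A z c) : ConnectedOn G A :=
  ⟨⟨c, hc⟩, fun a ha b hb => rw_trans (h a ha) (rw_symm (h b hb))⟩

lemma endpoint_not_mem_takeUntil [DecidableEq V] {a b : V} {p : G.Walk a b} (hp : p.IsPath)
    {z : V} (hz : z ∈ p.support) (hzb : z ≠ b) : b ∉ (p.takeUntil z hz).support := by
  intro hb
  have hnd : ((p.takeUntil z hz).append (p.dropUntil z hz)).support.Nodup := by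
    rw [p.take_spec hz]; exact hp.support_nodup
  rw [Walk.support_append] at hnd
  have hdis := (List.nodup_append'.mp hnd).2.2
  have hb2 : b ∈ (p.dropUntil z hz).support.tail := by
    have hmem := Walk.end_mem_support (p.dropUntil z hz)
    rw [Walk.support_eq_cons (p.dropUntil z hz)] at hmem
    rcases List.mem_cons.mp hmem with h | h
    · exact absurd h.symm hzb
    · exact h
  exact hdis hb hb2

lemma start_not_mem_dropUntil [DecidableEq V] {a b : V} {p : G.Walk a b} (hp : p.IsPath)
    {z : V} (hz : z ∈ p.support) (hza : z ≠ a) : a ∉ (p.dropUntil z hz).support := by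
  intro ha
  have hnd : ((p.takeUntil z hz).append (p.dropUntil z hz)).support.Nodup := by
    rw [p.take_spec hz]; exact hp.support_nodup
  rw [Walk.support_append] at hnd
  have hdis := (List.nodup_append'.mp hnd).2.2
  have ha2 : a ∈ (p.dropUntil z hz).support.tail := by
    rw [Walk.support_eq_cons (p.dropUntil z hz)] at ha
    rcases List.mem_cons.mp ha with h | h
    · exact absurd h.symm hza
    · exact h
  exact hdis (Walk.start_mem_support _) ha2

lemma path_split [DecidableEq V] {a b : V} {p : G.Walk a b} (hp : p.IsPath)
    {w : V} (hw : w ∈ p.support) {z : V} (hz : z ∈ p.support) (hzw : z ≠ w) :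
    ReachableWithin G ({x | x ∈ p.support} \ {w}) a z ∨
    ReachableWithin G ({x | x ∈ p.support} \ {w}) z b := by
  have hz' : z ∈ (p.takeUntil w hw).support ∨ z ∈ (p.dropUntil w hw).support := by
    have hmem : z ∈ ((p.takeUntil w hw).append (p.dropUntil w hw)).support := by
      rw [p.take_spec hw]; exact hz
    exact (Walk.mem_support_append_iff _ _).1 hmem
  rcases hz' with h1 | h2
  · left
    have hp1 : (p.takeUntil w hw).IsPath := hp.takeUntil hw
    refine ⟨(p.takeUntil w hw).takeUntil z h1, fun x hx => ?_⟩
    have hxP : x ∈ p.support :=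
      p.support_takeUntil_subset hw ((p.takeUntil w hw).support_takeUntil_subset h1 hx)
    have hxw : x ≠ w := by
      rintro rfl
      exact endpoint_not_mem_takeUntil hp1 h1 hzw hx
    exact ⟨hxP, hxw⟩
  · right
    have hp2 : (p.dropUntil w hw).IsPath := hp.dropUntil hw
    refine ⟨(p.dropUntil w hw).dropUntil z h2, fun x hx => ?_⟩
    have hxP : x ∈ p.support :=
      p.support_dropUntil_subset hw ((p.dropUntil w hw).support_dropUntil_subset h2 hx)
    have hxw : x ≠ w := by
      rintro rfl
      exact start_not_mem_dropUntil hp2 h2 hzw hx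
    exact ⟨hxP, hxw⟩

lemma exists_until (A : Set V) [DecidablePred (· ∈ A)] {a b : V} (p : G.Walk a b) (hb : b ∈ A) :
    ∃ y ∈ A, ∃ q : G.Walk a y, (∀ x ∈ q.support, x ∈ p.support) ∧
      ∀ x ∈ q.support, x ≠ y → x ∉ A := by
  induction p with
  | nil =>
    exact ⟨_, hb, Walk.nil, fun x hx => hx,
      fun x hx hxy => absurd (by simpa using hx) hxy⟩
  | @cons a c b h p ih =>
    by_cases ha : a ∈ A
    · refine ⟨a, ha, Walk.nil, fun x hx => ?_, fun x hx hxy => absurd (by simpa using hx) hxy⟩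
      have : x = a := by simpa using hx
      subst this; exact Walk.start_mem_support _
    · obtain ⟨y, hy, q, hq1, hq2⟩ := ih hb
      refine ⟨y, hy, Walk.cons h q, fun x hx => ?_, fun x hx hxy => ?_⟩
      · rcases List.mem_cons.mp (by simpa [Walk.support_cons] using hx) with rfl | hx'
        · exact Walk.start_mem_support _
        · rw [Walk.support_cons]; exact List.mem_cons_of_mem _ (hq1 x hx')
      · rcases List.mem_cons.mp (by simpa [Walk.support_cons] using hx) with rfl | hx'
        · exact ha
        · exact hq2 x hx' hxy

end Helpers

section Ear

variable {V : Type*} {G : SimpleGraph V}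

lemma ear [DecidableEq V] {A : Set V} (hA : BiconnectedOn G A) {y v x : V}
    (hy : y ∈ A) (hx : x ∈ A) (hxy : x ≠ y) (hvA : v ∉ A)
    (R : G.Walk y v) (hR : R.IsPath) (hvx : G.Adj v x)
    (hRA : ∀ z ∈ R.support, z ≠ y → z ∉ A) (hxR : x ∉ R.support) :
    BiconnectedOn G (A ∪ {z | z ∈ R.support}) := by
  set S : Set V := {z | z ∈ R.support} with hSdef
  have hyS : y ∈ S := Walk.start_mem_support R
  have hvS : v ∈ S := Walk.end_mem_support R
  have hyv : y ≠ v := fun h => hvA (h ▸ hy)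
  have hconnA : ConnectedOn G A := hA.1
  have hSy : ∀ z ∈ S, ReachableWithin G S z y := fun z hz =>
    rw_symm ⟨R.takeUntil z hz, fun t ht => R.support_takeUntil_subset hz ht⟩
  constructor
  · refine connectedOn_hub y (Or.inl hy) ?_
    rintro z (hzA | hzS)
    · exact rw_mono Set.subset_union_left (hconnA.2 hzA hy)
    · exact rw_mono (fun t ht => Or.inr ht) (hSy z hzS)
  · rintro w hw hne
    by_cases hwS : w ∈ S
    · by_cases hwy : w = y
      · subst hwy
        -- hub x
        refine connectedOn_hub x ⟨Or.inl hx, hxy⟩ ?_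
        rintro z ⟨hzA | hzS, hzw⟩
        · have hAne : (A \ {w}).Nonempty := ⟨x, hx, hxy⟩
          have hzx := (hA.2 w hy hAne).2 ⟨hzA, hzw⟩ ⟨hx, hxy⟩
          exact rw_mono (fun t ht => ⟨Or.inl ht.1, ht.2⟩) hzx
        · rcases path_split hR (Walk.start_mem_support R) hzS hzw with h | h
          · exfalso
            obtain ⟨p, hp⟩ := h
            exact (hp w (Walk.start_mem_support p)).2 rfl
          · refine rw_trans (rw_mono (fun t ht => ⟨Or.inr ht.1, ht.2⟩) h)
              (rw_adj hvx ⟨Or.inr hvS, hyv.symm⟩ ⟨Or.inl hx, hxy⟩)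
      · have hwA : w ∉ A := hRA w hwS hwy
        by_cases hwv : w = v
        · subst hwv
          -- hub y
          refine connectedOn_hub y ⟨Or.inl hy, hyv⟩ ?_
          rintro z ⟨hzA | hzS, hzw⟩
          · exact rw_mono (fun t ht => ⟨Or.inl ht, fun hh => hwA (hh ▸ ht)⟩) (hconnA.2 hzA hy)
          · rcases path_split hR hvS hzS hzw with h | h
            · exact rw_mono (fun t ht => ⟨Or.inr ht.1, ht.2⟩) (rw_symm h)
            · exfalso
              obtain ⟨p, hp⟩ := h
              exact (hp w (Walk.end_mem_support p)).2 rfl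
        · -- hub x
          have hxw : x ≠ w := fun h => hxR (h ▸ hwS)
          have hsubA : A ⊆ (A ∪ S) \ {w} := fun t ht => ⟨Or.inl ht, fun hh => hwA (hh ▸ ht)⟩
          refine connectedOn_hub x ⟨Or.inl hx, hxw⟩ ?_
          rintro z ⟨hzA | hzS, hzw⟩
          · exact rw_mono hsubA (hconnA.2 hzA hx)
          · rcases path_split hR hwS hzS hzw with h | h
            · exact rw_trans (rw_mono (fun t ht => ⟨Or.inr ht.1, ht.2⟩) (rw_symm h))
                (rw_mono hsubA (hconnA.2 hy hx))
            · exact rw_trans (rw_mono (fun t ht => ⟨Or.inr ht.1, ht.2⟩) h)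
                (rw_adj hvx ⟨Or.inr hvS, fun hh => hwv (hh.symm : w = v)⟩ ⟨Or.inl hx, hxw⟩)
    · -- w ∉ S, so w ∈ A; hub y
      have hwA : w ∈ A := hw.resolve_right hwS
      have hyw : y ≠ w := fun h => hwS (h ▸ hyS)
      refine connectedOn_hub y ⟨Or.inl hy, hyw⟩ ?_
      rintro z ⟨hzA | hzS, hzw⟩
      · have hAne : (A \ {w}).Nonempty := ⟨y, hy, hyw⟩
        exact rw_mono (fun t ht => ⟨Or.inl ht.1, ht.2⟩) ((hA.2 w hwA hAne).2 ⟨hzA, hzw⟩ ⟨hy, hyw⟩)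
      · exact rw_mono (fun t ht => ⟨Or.inr ht, fun hh => hwS (hh ▸ ht)⟩) (hSy z hzS)

end Ear

section Key

lemma key_bicc {V : Type*} [Fintype V] {G : SimpleGraph V} :
    ∀ n : ℕ, ∀ u v : V, u ≠ v → G.Reachable u v → G.dist u v = n →
    (∀ w : V, w ≠ u → w ≠ v → ReachableWithin G {w}ᶜ u v) →
    ∃ A : Set V, BiconnectedOn G A ∧ u ∈ A ∧ v ∈ A := by
  classical
  intro n
  induction n using Nat.strong_induction_on with
  | _ n ih =>
  intro u v huv hr hd H
  rcases n with _ | n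
  · exfalso
    rcases (SimpleGraph.dist_eq_zero_iff_eq_or_not_reachable).1 hd with h | h
    · exact huv h
    · exact h hr
  rcases n with _ | m
  · have hadj : G.Adj u v := SimpleGraph.dist_eq_one_iff_adj.1 hd
    refine ⟨{u, v}, ⟨?_, ?_⟩, Or.inl rfl, Or.inr rfl⟩
    · refine connectedOn_hub u (Or.inl rfl) ?_
      rintro z hz
      simp only [Set.mem_insert_iff, Set.mem_singleton_iff] at hz
      rcases hz with hz | hz
      · rw [hz]; exact rw_refl (Or.inl rfl)
      · rw [hz]; exact rw_adj hadj.symm (Or.inr rfl) (Or.inl rfl)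
    · intro w hwmem hne
      obtain ⟨t, htA, htw⟩ := hne
      refine connectedOn_hub t ⟨htA, htw⟩ ?_
      rintro z ⟨hzA, hzw⟩
      have htA0 := htA
      have hzw' : z ≠ w := fun h => hzw h
      have htw' : t ≠ w := fun h => htw h
      simp only [Set.mem_insert_iff, Set.mem_singleton_iff] at hwmem hzA htA
      have hzt : z = t := by
        rcases hwmem with hw | hw <;> rcases hzA with hz | hz <;> rcases htA with ht | ht <;>
          first
          | (exact hz.trans ht.symm)
          | (exact absurd (hz.trans hw.symm) hzw')
          | (exact absurd (ht.trans hw.symm) htw')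
      rw [hzt]; exact rw_refl ⟨htA0, htw⟩
  · obtain ⟨p0, hp0⟩ := hr.exists_walk_length_eq_dist
    set p := p0.bypass with hpdef
    have hppath : p.IsPath := p0.bypass_isPath
    have hplen : p.length = m + 2 := by
      refine le_antisymm ?_ ?_
      · calc p.length ≤ p0.length := Walk.length_bypass_le p0
          _ = m + 2 := by rw [hp0, hd]
      · calc m + 2 = G.dist u v := hd.symm
          _ ≤ p.length := SimpleGraph.dist_le p
    obtain ⟨x, hadj, q, hq⟩ := Walk.exists_eq_cons_of_ne huv.symm p.reverse
    have hconsq : (Walk.cons hadj q).IsPath := by rw [← hq]; exact hppath.reverse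
    have hqpath : q.IsPath := (Walk.cons_isPath_iff _ _).1 hconsq |>.1
    have hvq : v ∉ q.support := (Walk.cons_isPath_iff _ _).1 hconsq |>.2
    have hxv : x ≠ v := fun h => G.irrefl (h ▸ hadj)
    have hxu : x ≠ u := by
      rintro rfl
      have h1 : G.dist x v ≤ 1 := by
        have := SimpleGraph.dist_le (Walk.cons hadj.symm Walk.nil : G.Walk x v)
        simpa using this
      omega
    have hrx : G.Reachable u x := ⟨q.reverse⟩
    have hdx : G.dist u x ≤ m + 1 := by
      have hlq : q.length = m + 1 := by
        have hlr : p.reverse.length = m + 2 := by rw [Walk.length_reverse, hplen]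
        rw [hq] at hlr
        simpa using hlr
      calc G.dist u x ≤ q.reverse.length := SimpleGraph.dist_le _
        _ = m + 1 := by rw [Walk.length_reverse, hlq]
    have H' : ∀ w : V, w ≠ u → w ≠ x → ReachableWithin G {w}ᶜ u x := by
      intro w hwu hwx
      by_cases hwv : w = v
      · subst hwv
        refine ⟨q.reverse, fun t ht => ?_⟩
        have htq : t ∈ q.support := by simpa [Walk.support_reverse] using ht
        exact fun h => hvq ((Set.mem_singleton_iff.1 h) ▸ htq)
      · obtain ⟨W, hW⟩ := H w hwu hwv
        refine ⟨W.append (Walk.cons hadj Walk.nil), fun t ht => ?_⟩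
        rcases (Walk.mem_support_append_iff _ _).1 ht with h | h
        · exact hW t h
        · simp only [Walk.support_cons, Walk.support_nil, List.mem_cons,
            List.mem_singleton] at h
          rcases h with rfl | rfl | h'
          · exact fun hh => hwv (Set.mem_singleton_iff.1 hh).symm
          · exact fun hh => hwx (Set.mem_singleton_iff.1 hh).symm
          · exact absurd h' (List.not_mem_nil (a := t))
    obtain ⟨A, hA, huA, hxA⟩ :=
      ih (G.dist u x) (by omega) u x (Ne.symm hxu) hrx rfl H'
    by_cases hvA : v ∈ A
    · exact ⟨A, hA, huA, hvA⟩
    · obtain ⟨W, hW⟩ := H x hxu hxv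
      set P := W.bypass with hPdef
      have hxP : x ∉ P.support := by
        intro h
        exact (hW x (Walk.support_bypass_subset _ h)) rfl
      obtain ⟨y, hyA, q2, hq21, hq22⟩ := exists_until A P.reverse huA
      set R := q2.reverse.bypass with hRdef
      have hRpath : R.IsPath := q2.reverse.bypass_isPath
      have hRsup : ∀ t ∈ R.support, t ∈ q2.support := fun t ht => by
        have h1 := Walk.support_bypass_subset _ ht
        simpa [Walk.support_reverse] using h1
      have hRA : ∀ t ∈ R.support, t ≠ y → t ∉ A := fun t ht => hq22 t (hRsup t ht)
      have hxR2 : x ∉ R.support := by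
        intro h
        have h1 : x ∈ P.reverse.support := hq21 _ (hRsup x h)
        exact hxP (by simpa [Walk.support_reverse] using h1)
      have hxyne : x ≠ y := by
        rintro rfl
        exact hxR2 (Walk.start_mem_support R)
      have hear := ear hA hyA hxA hxyne hvA R hRpath hadj
        hRA hxR2
      exact ⟨A ∪ {z | z ∈ R.support}, hear, Or.inl huA, Or.inr (Walk.end_mem_support R)⟩

end Key

/-- Connected distinct vertices `u, v` lie in a common block of `G`
iff for every vertex `w ∉ {u,v}` they remain connected in `G − {w}`. -/
theorem stmt14 {V : Type*} [Fintype V] (G : SimpleGraph V) (u v : V) (huv : u ≠ v)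
    (hr : G.Reachable u v) :
    (∃ B : Set V, IsBlock G B ∧ u ∈ B ∧ v ∈ B) ↔
    ∀ w : V, w ≠ u → w ≠ v → ReachableWithin G {w}ᶜ u v := by
  classical
  constructor
  · rintro ⟨B, ⟨hbic, hmaxB⟩, huB, hvB⟩ w hwu hwv
    by_cases hwB : w ∈ B
    · have hne : (B \ {w}).Nonempty := ⟨u, huB, fun h => hwu ((Set.mem_singleton_iff.1 h).symm)⟩
      have h1 := (hbic.2 w hwB hne).2
        (show u ∈ B \ {w} from ⟨huB, fun h => hwu ((Set.mem_singleton_iff.1 h).symm)⟩)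
        (show v ∈ B \ {w} from ⟨hvB, fun h => hwv ((Set.mem_singleton_iff.1 h).symm)⟩)
      exact rw_mono (fun t ht => ht.2) h1
    · exact rw_mono (fun t ht hh => hwB ((Set.mem_singleton_iff.1 hh) ▸ ht)) (hbic.1.2 huB hvB)
  · intro H
    obtain ⟨A, hA, huA, hvA⟩ := key_bicc (G.dist u v) u v huv hr rfl H
    obtain ⟨B, hBF, hmax⟩ := Set.Finite.exists_maximalFor id
      {B : Set V | BiconnectedOn G B ∧ A ⊆ B} (Set.toFinite _) ⟨A, hA, subset_rfl⟩
    exact ⟨B, ⟨hBF.1, fun B' hsub hbic' => le_antisymm (hmax ⟨hbic', hBF.2.trans hsub⟩ hsub) hsub⟩,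
      hBF.2 huA, hBF.2 hvA⟩
end
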